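/- Let χ(t) = κ_{-1} t^{-1} + κ₀ + κ₁ t + … + κ_f t^f with all κ_k ≥ 0 and κ_{-1} > 0. For each n ≥ 1, the constant coefficient of χ(t)^n equals n·κ_{-1}^{n-1}·κ_{n-1} plus a polynomial (with integer coefficients, depending only on n) in κ₀, κ_{-1}κ₁, κ_{-1}²κ₂, …, κ_{-1}^{n-2}κ_{n-2}. Consequently, the sequence of constant coefficients I₁, I₂, …, I_{f+1} of powers of χ determines κ₀ and the products κ_{-1}^k κ_k for 1 ≤ k ≤ f. -/

import Mathlib

section CCPRAux
open Finset Polynomial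

variable {R : Type*} [CommRing R]

noncomputable def ccprB (c : ℕ → R) (N : ℕ) : R[X] :=
  1 + ∑ j ∈ Finset.range N, Polynomial.C (c j) * Polynomial.X ^ (j + 1)

lemma ccprB_coeff_zero (c : ℕ → R) (N : ℕ) : (ccprB c N).coeff 0 = 1 := by
  simp [ccprB, Polynomial.finset_sum_coeff, coeff_C_mul, coeff_X_pow, coeff_one]

lemma sq_dvd_add_pow (B t : R) (n : ℕ) :
    t ^ 2 ∣ (B + t) ^ (n + 1) - B ^ (n + 1) - (n + 1) * B ^ n * t := by
  induction n with
  | zero => refine ⟨0, by ring⟩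
  | succ n ih =>
    obtain ⟨s, hs⟩ := ih
    refine ⟨(n + 1) * B ^ n + s * (B + t), ?_⟩
    have hp : (B + t) ^ (n + 1 + 1) = (B + t) ^ (n + 1) * (B + t) := by ring
    push_cast
    rw [hp]
    linear_combination (B + t) * hs

lemma coeff_eq_of_X_pow_dvd {p q : R[X]} {m n : ℕ} (h : X ^ m ∣ p - q) (hn : n < m) :
    p.coeff n = q.coeff n := by
  obtain ⟨s, hs⟩ := h
  have := congrArg (fun r => Polynomial.coeff r n) hs
  simp only [coeff_sub, coeff_X_pow_mul'] at this
  rw [if_neg (by omega)] at this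
  exact sub_eq_zero.mp this

lemma ccprB_key (c : ℕ → R) {n N : ℕ} (hn : 1 ≤ n) (hN : n ≤ N) :
    ((ccprB c N) ^ n).coeff n = (n : R) * c (n - 1) + ((ccprB c (n - 1)) ^ n).coeff n := by
  have hn' : n - 1 + 1 = n := Nat.succ_pred_eq_of_pos hn
  set B := ccprB c (n - 1) with hB
  set t : R[X] := C (c (n - 1)) * X ^ n with ht
  set E : R[X] := ∑ j ∈ Finset.Ico n N, C (c j) * X ^ (j + 1) with hEdef
  have hsum : ∑ j ∈ Finset.range N, C (c j) * X ^ (j + 1)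
      = ((∑ j ∈ Finset.range (n - 1), C (c j) * X ^ (j + 1))
          + C (c (n - 1)) * X ^ ((n - 1) + 1)) + E := by
    rw [← Finset.sum_range_succ, hn', hEdef, Finset.range_eq_Ico, Finset.range_eq_Ico]
    exact (Finset.sum_Ico_consecutive (fun j => C (c j) * X ^ (j + 1)) (Nat.zero_le n) hN).symm
  have hsplit : ccprB c N = (B + t) + E := by
    rw [ccprB, hsum, hB, ht, ccprB, hn']; ring
  have hE : (X : R[X]) ^ (n + 1) ∣ E := by
    refine Finset.dvd_sum fun j hj => Dvd.dvd.mul_left ?_ _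
    exact pow_dvd_pow X (by simp only [Finset.mem_Ico] at hj; omega)
  have h1 : ((ccprB c N) ^ n).coeff n = ((B + t) ^ n).coeff n := by
    refine coeff_eq_of_X_pow_dvd ?_ (lt_add_one n)
    refine dvd_trans ?_ (sub_dvd_pow_sub_pow (ccprB c N) (B + t) n)
    rw [hsplit]; simpa using hE
  have h2 : ((B + t) ^ n).coeff n = (B ^ n + (n : R[X]) * B ^ (n - 1) * t).coeff n := by
    refine coeff_eq_of_X_pow_dvd ?_ (lt_add_one n)
    have hd := sq_dvd_add_pow B t (n - 1)
    rw [hn'] at hd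
    have hX : (X : R[X]) ^ (n + 1) ∣ t ^ 2 := by
      rw [ht, mul_pow, ← pow_mul]
      exact Dvd.dvd.mul_left (pow_dvd_pow X (by omega)) _
    refine dvd_trans hX ?_
    have hc : ((n - 1 : ℕ) : R[X]) + 1 = (n : R[X]) := by
      rw [← hn']; push_cast; ring
    have : (B + t) ^ n - (B ^ n + (n : R[X]) * B ^ (n - 1) * t)
        = (B + t) ^ n - B ^ n - (((n - 1 : ℕ) : R[X]) + 1) * B ^ (n - 1) * t := by
      rw [hc]; ring
    rw [this]
    exact_mod_cast hd
  have h3 : ((n : R[X]) * B ^ (n - 1) * t).coeff n = (n : R) * c (n - 1) := by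
    have : (n : R[X]) * B ^ (n - 1) * t = ((n : R[X]) * B ^ (n - 1) * C (c (n - 1))) * X ^ n := by
      rw [ht]; ring
    rw [this]
    have h0 := coeff_mul_X_pow ((n : R[X]) * B ^ (n - 1) * C (c (n - 1))) n 0
    rw [zero_add] at h0
    have hpow : (ccprB c (n - 1) ^ (n - 1)).coeff 0 = 1 := by
      rw [← constantCoeff_apply, map_pow, constantCoeff_apply, ccprB_coeff_zero, one_pow]
    rw [h0]
    simp [hB, hpow]
  rw [h1, h2, coeff_add, h3, add_comm]

lemma ccprB_map {R' : Type*} [CommRing R'] (φ : R →+* R') (c : ℕ → R) (N : ℕ) :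
    (ccprB c N).map φ = ccprB (fun j => φ (c j)) N := by
  simp [ccprB, Polynomial.map_add, Polynomial.map_one, Polynomial.map_sum, Polynomial.map_mul,
    Polynomial.map_pow, map_C, map_X]

lemma ccprB_ext {c : ℕ → R} {N M : ℕ} (hNM : N ≤ M) (hc : ∀ j, N ≤ j → c j = 0) :
    ccprB c M = ccprB c N := by
  unfold ccprB
  congr 1
  refine (Finset.sum_subset (Finset.range_subset_range.mpr hNM) (fun j _ hjn => ?_)).symm
  rw [hc j (le_of_not_gt (fun h => hjn (Finset.mem_range.mpr h)))]
  simp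

lemma ccprB_congr {c c' : ℕ → R} {N : ℕ} (h : ∀ j, j < N → c j = c' j) :
    ccprB c N = ccprB c' N := by
  unfold ccprB
  congr 1
  exact Finset.sum_congr rfl fun j hj => by rw [h j (Finset.mem_range.mp hj)]

lemma coeff_comp_C_mul_X (p : R[X]) (a : R) (k : ℕ) :
    (p.comp (C a * X)).coeff k = p.coeff k * a ^ k := by
  induction p using Polynomial.induction_on' with
  | add p q hp hq => simp [add_comp, hp, hq, add_mul]
  | monomial i b =>
    have h1 : (monomial i b).comp (C a * X) = C (b * a ^ i) * X ^ i := by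
      rw [← C_mul_X_pow_eq_monomial, mul_comp, C_comp, pow_comp, X_comp, mul_pow, ← C_pow, C_mul]
      ring
    rw [h1, coeff_C_mul, coeff_X_pow, ← C_mul_X_pow_eq_monomial, coeff_C_mul, coeff_X_pow]
    split_ifs with h
    · subst h; ring
    · ring

noncomputable def ccprP (κ : ℤ → ℝ) (f : ℕ) : Polynomial ℝ :=
  ∑ j ∈ Finset.range (f + 2), Polynomial.C (κ ((j : ℤ) - 1)) * Polynomial.X ^ j

lemma ccprP_coeff (κ : ℤ → ℝ) (f k : ℕ) :
    (ccprP κ f).coeff k = if k < f + 2 then κ ((k : ℤ) - 1) else 0 := by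
  simp only [ccprP, Polynomial.finset_sum_coeff, coeff_C_mul, coeff_X_pow, mul_ite, mul_one,
    mul_zero]
  rw [Finset.sum_ite_eq (Finset.range (f + 2)) k fun j => κ ((j : ℤ) - 1)]
  simp [Finset.mem_range]

lemma ccprB_coeff (c : ℕ → ℝ) (N k : ℕ) :
    (ccprB c N).coeff k = if k = 0 then 1 else if k - 1 < N then c (k - 1) else 0 := by
  simp only [ccprB, coeff_add, Polynomial.finset_sum_coeff, coeff_C_mul, coeff_X_pow, mul_ite,
    mul_one, mul_zero, coeff_one]
  cases k with
  | zero => simp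
  | succ m =>
    have : ∀ j ∈ Finset.range N, (if (m + 1 : ℕ) = j + 1 then c j else 0)
        = if m = j then c j else 0 := by
      intro j _; simp
    rw [Finset.sum_congr rfl this, Finset.sum_ite_eq (Finset.range N) m c]
    simp [Finset.mem_range]

lemma ccprP_comp (κ : ℤ → ℝ) (f : ℕ) :
    (ccprP κ f).comp (C (κ (-1)) * X)
      = C (κ (-1)) * ccprB (fun j => κ (-1) ^ j * κ (j : ℤ)) (f + 1) := by
  ext k
  rw [coeff_comp_C_mul_X, coeff_C_mul, ccprP_coeff, ccprB_coeff]
  cases k with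
  | zero => simp
  | succ m =>
    simp only [Nat.succ_ne_zero, if_false, Nat.add_sub_cancel]
    by_cases h : m + 1 < f + 2
    · rw [if_pos h, if_pos (by omega)]
      push_cast
      ring
    · rw [if_neg h, if_neg (by omega)]
      simp

lemma ccprP_pow_coeff (κ : ℤ → ℝ) (f n : ℕ) (ha : κ (-1) ≠ 0) :
    ((ccprP κ f) ^ n).coeff n
      = ((ccprB (fun j => κ (-1) ^ j * κ (j : ℤ)) (f + 1)) ^ n).coeff n := by
  have h2 : ((ccprP κ f) ^ n).comp (C (κ (-1)) * X)
      = C (κ (-1)) ^ n * (ccprB (fun j => κ (-1) ^ j * κ (j : ℤ)) (f + 1)) ^ n := by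
    rw [pow_comp, ccprP_comp, mul_pow]
  have h3 := congrArg (fun r => Polynomial.coeff r n) h2
  simp only [coeff_comp_C_mul_X, ← C_pow, coeff_C_mul] at h3
  have ha' : κ (-1) ^ n ≠ 0 := pow_ne_zero n ha
  rw [mul_comm] at h3
  exact mul_left_cancel₀ ha' h3

lemma toLaurent_apply_coe (q : Polynomial ℝ) (m : ℕ) :
    (Polynomial.toLaurent q).coeff (m : ℤ) = q.coeff m := by
  rw [LaurentPolynomial.coeff_toLaurent]
  exact Finsupp.mapDomain_apply Nat.castEmbedding.injective _ m

lemma chi_eq (κ : ℤ → ℝ) (f : ℕ) :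
    (∑ k ∈ Finset.Icc (-1 : ℤ) (f : ℤ),
        LaurentPolynomial.C (κ k) * LaurentPolynomial.T k)
      = LaurentPolynomial.T (-1) * Polynomial.toLaurent (ccprP κ f) := by
  have hL : Polynomial.toLaurent (ccprP κ f)
      = ∑ j ∈ Finset.range (f + 2),
          LaurentPolynomial.C (κ ((j : ℤ) - 1)) * LaurentPolynomial.T (j : ℤ) := by
    rw [ccprP, map_sum]
    refine Finset.sum_congr rfl fun j _ => ?_
    rw [C_mul_X_pow_eq_monomial, Polynomial.toLaurent_C_mul_T]
  rw [hL, Finset.mul_sum]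
  have he : Finset.Icc (-1 : ℤ) (f : ℤ)
      = Finset.map ⟨fun j : ℕ => (j : ℤ) - 1, show Function.Injective (fun j : ℕ => (j : ℤ) - 1) from fun a b h => by simp only [] at h; omega⟩ (Finset.range (f + 2)) := by
    ext x
    simp only [Finset.mem_Icc, Finset.mem_map, Finset.mem_range, Function.Embedding.coeFn_mk]
    constructor
    · intro h; exact ⟨(x + 1).toNat, by omega, by omega⟩
    · rintro ⟨j, hj, rfl⟩; omega
  rw [he, Finset.sum_map]
  refine Finset.sum_congr rfl fun j _ => ?_
  simp only [Function.Embedding.coeFn_mk]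
  rw [sub_eq_add_neg, mul_comm (LaurentPolynomial.T (-1)), mul_assoc,
    ← LaurentPolynomial.T_add]

lemma chi_pow_const (κ : ℤ → ℝ) (f n : ℕ) :
    (((∑ k ∈ Finset.Icc (-1 : ℤ) (f : ℤ),
        LaurentPolynomial.C (κ k) * LaurentPolynomial.T k : LaurentPolynomial ℝ)) ^ n).coeff 0
      = ((ccprP κ f) ^ n).coeff n := by
  rw [chi_eq, mul_pow, LaurentPolynomial.T_pow, ← map_pow]
  have h1 : ((LaurentPolynomial.T ((n : ℤ) * -1)
        * Polynomial.toLaurent ((ccprP κ f) ^ n) : LaurentPolynomial ℝ)).coeff 0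
      = 1 * (Polynomial.toLaurent ((ccprP κ f) ^ n)).coeff (-((n : ℤ) * -1) + 0) :=
    AddMonoidAlgebra.coeff_single_mul_apply _ _ _ _
  rw [h1, one_mul]
  have h2 : (-((n : ℤ) * -1) + 0) = ((n : ℕ) : ℤ) := by push_cast; ring
  rw [h2, toLaurent_apply_coe]

lemma ccpr_formula (n f : ℕ) (hn : 1 ≤ n) (κ : ℤ → ℝ) (ha : κ (-1) ≠ 0)
    (hs : ∀ k, κ k ≠ 0 → k ∈ Finset.Icc (-1 : ℤ) (f : ℤ)) :
    (((∑ k ∈ Finset.Icc (-1 : ℤ) (f : ℤ),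
        LaurentPolynomial.C (κ k) * LaurentPolynomial.T k : LaurentPolynomial ℝ)) ^ n).coeff 0
      = n * κ (-1) ^ (n - 1) * κ ((n : ℤ) - 1)
        + ((ccprB (fun j => κ (-1) ^ j * κ (j : ℤ)) (n - 1)) ^ n).coeff n := by
  set μ : ℕ → ℝ := fun j => κ (-1) ^ j * κ (j : ℤ) with hμ
  have hμ0 : ∀ j, f + 1 ≤ j → μ j = 0 := by
    intro j hj
    have hkj : κ (j : ℤ) = 0 := by
      by_contra h
      have := hs _ h
      simp only [Finset.mem_Icc] at this
      omega
    simp [hμ, hkj]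
  rw [chi_pow_const, ccprP_pow_coeff κ f n ha]
  have hBM : ccprB μ (f + 1) = ccprB μ (max (f + 1) n) :=
    (ccprB_ext (le_max_left _ _) hμ0).symm
  rw [hBM, ccprB_key μ hn (le_max_right _ _)]
  have hμn : μ (n - 1) = κ (-1) ^ (n - 1) * κ ((n : ℤ) - 1) := by
    simp only [hμ]
    rw [show (((n - 1 : ℕ)) : ℤ) = (n : ℤ) - 1 by omega]
  rw [hμn]
  ring

lemma ccpr_part1 (n : ℕ) (hn : 1 ≤ n) : ∃ P : MvPolynomial ℕ ℤ,
    P ∈ MvPolynomial.supported ℤ {j : ℕ | j ≤ n - 2} ∧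
    ∀ (f : ℕ) (κ : ℤ → ℝ), (∀ k, 0 ≤ κ k) → 0 < κ (-1) →
      (∀ k, κ k ≠ 0 → k ∈ Finset.Icc (-1 : ℤ) (f : ℤ)) →
      (((∑ k ∈ Finset.Icc (-1 : ℤ) (f : ℤ),
          LaurentPolynomial.C (κ k) * LaurentPolynomial.T k : LaurentPolynomial ℝ)) ^ n).coeff 0
        = n * κ (-1) ^ (n - 1) * κ ((n : ℤ) - 1)
          + MvPolynomial.aeval (fun j : ℕ => κ (-1) ^ j * κ (j : ℤ)) P := by
  classical
  set S := MvPolynomial.supported ℤ {j : ℕ | j ≤ n - 2} with hS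
  set Φ : Polynomial (MvPolynomial ℕ ℤ) := ccprB (fun j => MvPolynomial.X j) (n - 1) with hΦ
  refine ⟨(Φ ^ n).coeff n, ?_, ?_⟩
  · set c' : ℕ → S := fun j => if h : j ≤ n - 2 then
        ⟨MvPolynomial.X j, by rw [hS]; exact MvPolynomial.X_mem_supported.mpr h⟩ else 0 with hc'
    have hmap : Polynomial.map (Subalgebra.val S).toRingHom (ccprB c' (n - 1)) = Φ := by
      rw [ccprB_map, hΦ]
      refine ccprB_congr fun j hj => ?_
      have hj2 : j ≤ n - 2 := by omega
      simp [hc', hj2]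
    rw [← hmap, ← Polynomial.map_pow, Polynomial.coeff_map]
    exact SetLike.coe_mem _
  · intro f κ _ hpos hsupp
    rw [ccpr_formula n f hn κ (ne_of_gt hpos) hsupp]
    congr 1
    have hmap : Polynomial.map (MvPolynomial.aeval
          (fun j : ℕ => κ (-1) ^ j * κ (j : ℤ)) : MvPolynomial ℕ ℤ →ₐ[ℤ] ℝ).toRingHom Φ
        = ccprB (fun j => κ (-1) ^ j * κ (j : ℤ)) (n - 1) := by
      rw [hΦ, ccprB_map]
      exact ccprB_congr fun j hj => by simp
    conv_lhs => rw [← hmap, ← Polynomial.map_pow, Polynomial.coeff_map]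
    rfl

lemma ccpr_part2 (f : ℕ) (κ κ' : ℤ → ℝ) (hκ : ∀ k, 0 ≤ κ k) (hκ' : ∀ k, 0 ≤ κ' k)
    (hpos : 0 < κ (-1)) (hpos' : 0 < κ' (-1))
    (hsupp : ∀ k, κ k ≠ 0 → k ∈ Finset.Icc (-1 : ℤ) (f : ℤ))
    (hsupp' : ∀ k, κ' k ≠ 0 → k ∈ Finset.Icc (-1 : ℤ) (f : ℤ))
    (hI : ∀ n : ℕ, 1 ≤ n → n ≤ f + 1 →
      (((∑ k ∈ Finset.Icc (-1 : ℤ) (f : ℤ),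
          LaurentPolynomial.C (κ k) * LaurentPolynomial.T k : LaurentPolynomial ℝ)) ^ n).coeff 0
        = (((∑ k ∈ Finset.Icc (-1 : ℤ) (f : ℤ),
          LaurentPolynomial.C (κ' k) * LaurentPolynomial.T k : LaurentPolynomial ℝ)) ^ n).coeff 0) :
    ∀ k : ℕ, k ≤ f → κ (-1) ^ k * κ (k : ℤ) = κ' (-1) ^ k * κ' (k : ℤ) := by
  intro k
  induction k using Nat.strong_induction_on with
  | _ k ih =>
    intro hk
    have h1 := ccpr_formula (k + 1) f (by omega) κ (ne_of_gt hpos) hsupp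
    have h2 := ccpr_formula (k + 1) f (by omega) κ' (ne_of_gt hpos') hsupp'
    have hIe := hI (k + 1) (by omega) (by omega)
    rw [h1, h2] at hIe
    have hcc : ccprB (fun j => κ (-1) ^ j * κ (j : ℤ)) (k + 1 - 1)
        = ccprB (fun j => κ' (-1) ^ j * κ' (j : ℤ)) (k + 1 - 1) := by
      refine ccprB_congr fun j hj => ?_
      exact ih j (by omega) (by omega)
    rw [hcc] at hIe
    have hadd := add_right_cancel hIe
    rw [Nat.add_sub_cancel, show ((k + 1 : ℕ) : ℤ) - 1 = (k : ℤ) by push_cast; ring] at hadd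
    have hne : ((k + 1 : ℕ) : ℝ) ≠ 0 := Nat.cast_ne_zero.mpr (Nat.succ_ne_zero k)
    rw [mul_assoc, mul_assoc] at hadd
    exact mul_left_cancel₀ hne hadd

end CCPRAux


open Finset LaurentPolynomial

/-- For `χ(t) = κ_{-1} t^{-1} + κ₀ + κ₁ t + ⋯ + κ_f t^f` with `κ_k ≥ 0` and `κ_{-1} > 0`,
the constant coefficient of `χ(t)^n` equals `n·κ_{-1}^{n-1}·κ_{n-1}` plus a polynomial
with integer coefficients, depending only on `n`, in `κ₀, κ_{-1}κ₁, …, κ_{-1}^{n-2}κ_{n-2}`.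
Consequently, the constant coefficients `I₁, …, I_{f+1}` of the powers of `χ` determine
`κ₀` and the products `κ_{-1}^k κ_k` for `1 ≤ k ≤ f`. -/
theorem const_coeff_pow_recursion :
    (∀ n : ℕ, 1 ≤ n → ∃ P : MvPolynomial ℕ ℤ,
      P ∈ MvPolynomial.supported ℤ {j : ℕ | j ≤ n - 2} ∧
      ∀ (f : ℕ) (κ : ℤ → ℝ), (∀ k, 0 ≤ κ k) → 0 < κ (-1) →
        (∀ k, κ k ≠ 0 → k ∈ Finset.Icc (-1 : ℤ) (f : ℤ)) →
        (((∑ k ∈ Finset.Icc (-1 : ℤ) (f : ℤ), C (κ k) * T k : LaurentPolynomial ℝ)) ^ n).coeff 0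
          = n * κ (-1) ^ (n - 1) * κ ((n : ℤ) - 1)
            + MvPolynomial.aeval (fun j : ℕ => κ (-1) ^ j * κ (j : ℤ)) P) ∧
    (∀ (f : ℕ) (κ κ' : ℤ → ℝ), (∀ k, 0 ≤ κ k) → (∀ k, 0 ≤ κ' k) →
      0 < κ (-1) → 0 < κ' (-1) →
      (∀ k, κ k ≠ 0 → k ∈ Finset.Icc (-1 : ℤ) (f : ℤ)) →
      (∀ k, κ' k ≠ 0 → k ∈ Finset.Icc (-1 : ℤ) (f : ℤ)) →
      (∀ n : ℕ, 1 ≤ n → n ≤ f + 1 →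
        (((∑ k ∈ Finset.Icc (-1 : ℤ) (f : ℤ), C (κ k) * T k : LaurentPolynomial ℝ)) ^ n).coeff 0
          = (((∑ k ∈ Finset.Icc (-1 : ℤ) (f : ℤ), C (κ' k) * T k : LaurentPolynomial ℝ)) ^ n).coeff 0) →
      ∀ k : ℕ, k ≤ f → κ (-1) ^ k * κ (k : ℤ) = κ' (-1) ^ k * κ' (k : ℤ)) := by
  exact ⟨ccpr_part1, ccpr_part2⟩
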